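/- Let X_1,…,X_n be i.i.d. with density f bounded below by δ > 0 on its support [x_L, x_R). Let X_{(n-1)} < X_{(n)} denote the two largest order statistics. Then E[ 1/(x_R − X_{(n-1)})² · 1{exactly two observations lie in [x_R−h, x_R)} ] = +∞ for any h ∈ (0, x_R − x_L). -/

import Mathlib

open MeasureTheory
open scoped Classical

/-- The `k`-th smallest value (0-indexed) among `ω 0, …, ω (n-1)`. -/
noncomputable def orderStat (n : ℕ) (k : ℕ) (ω : Fin n → ℝ) : ℝ :=
  ((List.ofFn ω).insertionSort (· ≤ ·)).getD k 0

open scoped ENNReal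

lemma sorted_le_getD {l : List ℝ} (hs : l.Pairwise (· ≤ ·)) {k : ℕ} (hk : k < l.length)
    {a : ℝ} (hc : l.countP (fun x => decide (x < a)) ≤ k) : a ≤ l.getD k 0 := by
  by_contra hlt
  push_neg at hlt
  rw [List.getD_eq_getElem?_getD, List.getElem?_eq_getElem hk] at hlt
  simp only [Option.getD_some] at hlt
  have h1 : (l.take (k+1)).countP (fun x => decide (x < a)) = k + 1 := by
    rw [(List.countP_eq_length (p := fun x => decide (x < a))).mpr, List.length_take]
    · omega
    · intro x hx
      rw [List.mem_take_iff_getElem] at hx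
      obtain ⟨i, hi, rfl⟩ := hx
      have hik : i ≤ k := by omega
      have hle : l[i] ≤ l[k] := by
        rcases eq_or_lt_of_le hik with h | h
        · subst h; rfl
        · exact (List.pairwise_iff_getElem.mp hs) i k (by omega) hk h
      simp only [decide_eq_true_eq]
      linarith
  have h2 : l.countP (fun x => decide (x < a)) =
      (l.take (k+1)).countP (fun x => decide (x < a)) +
      (l.drop (k+1)).countP (fun x => decide (x < a)) := by
    rw [← List.countP_append, List.take_append_drop]
  omega

lemma orderStat_mem {n : ℕ} {k : ℕ} (hk : k < n) (ω : Fin n → ℝ) :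
    ∃ i, orderStat n k ω = ω i := by
  have hlen : ((List.ofFn ω).insertionSort (· ≤ ·)).length = n :=
    ((List.ofFn ω).perm_insertionSort (· ≤ ·)).length_eq.trans List.length_ofFn
  have hmem : orderStat n k ω ∈ (List.ofFn ω).insertionSort (· ≤ ·) := by
    rw [orderStat, List.getD_eq_getElem?_getD, List.getElem?_eq_getElem (by rw [hlen]; omega),
      Option.getD_some]
    exact List.getElem_mem _
  have : orderStat n k ω ∈ List.ofFn ω :=
    (((List.ofFn ω).perm_insertionSort (· ≤ ·)).mem_iff).mp hmem
  rw [List.mem_ofFn] at this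
  obtain ⟨i, hi⟩ := this
  exact ⟨i, hi.symm⟩

lemma le_orderStat {n : ℕ} {ω : Fin n → ℝ} {a : ℝ} {i j : Fin n} (hij : i ≠ j)
    (hi : a ≤ ω i) (hj : a ≤ ω j) {k : ℕ} (hk : k < n) (hk2 : n ≤ k + 2) :
    a ≤ orderStat n k ω := by
  have hlen : ((List.ofFn ω).insertionSort (· ≤ ·)).length = n :=
    ((List.ofFn ω).perm_insertionSort (· ≤ ·)).length_eq.trans List.length_ofFn
  apply sorted_le_getD (List.pairwise_insertionSort _ _) (by rw [hlen]; omega)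
  have hperm : ((List.ofFn ω).insertionSort (· ≤ ·)).countP (fun x => decide (x < a)) =
      (List.ofFn ω).countP (fun x => decide (x < a)) :=
    (((List.ofFn ω).perm_insertionSort (· ≤ ·))).countP_eq _
  have hge : 2 ≤ (List.ofFn ω).countP (fun x => decide (a ≤ x)) := by
    rw [List.ofFn_eq_map, List.countP_map, List.countP_eq_length_filter]
    set L := (List.finRange n).filter ((fun x => decide (a ≤ x)) ∘ ω) with hL
    have hnd : L.Nodup := (List.nodup_finRange n).filter _
    have hiL : i ∈ L := by
      rw [hL, List.mem_filter]
      exact ⟨List.mem_finRange i, by simpa using hi⟩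
    have hjL : j ∈ L := by
      rw [hL, List.mem_filter]
      exact ⟨List.mem_finRange j, by simpa using hj⟩
    have hsub : ({i, j} : Finset (Fin n)) ⊆ L.toFinset := by
      intro x hx
      rcases Finset.mem_insert.mp hx with rfl | hx
      · exact List.mem_toFinset.mpr hiL
      · exact List.mem_toFinset.mpr (by rw [Finset.mem_singleton.mp hx]; exact hjL)
    calc 2 = ({i, j} : Finset (Fin n)).card := (Finset.card_pair hij).symm
    _ ≤ L.toFinset.card := Finset.card_le_card hsub
    _ = L.length := List.toFinset_card_of_nodup hnd
  have htot : (List.ofFn ω).length = (List.ofFn ω).countP (fun x => decide (x < a)) +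
      (List.ofFn ω).countP (fun x => ¬(fun x => decide (x < a)) x) :=
    List.length_eq_countP_add_countP _
  have hcongr : (List.ofFn ω).countP (fun x => ¬(fun x => decide (x < a)) x)
      = (List.ofFn ω).countP (fun x => decide (a ≤ x)) := by
    apply List.countP_congr
    intro x _
    simp [not_lt]
  rw [List.length_ofFn] at htot
  omega

lemma mu_Ico_ge (f : ℝ → ℝ) (xL xR δ : ℝ) (hδ : 0 < δ)
    (hf_lb : ∀ x ∈ Set.Ico xL xR, δ ≤ f x)
    {a b : ℝ} (ha : xL ≤ a) (hb : b ≤ xR) :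
    ENNReal.ofReal (δ * (b - a)) ≤
      (volume.withDensity fun x => ENNReal.ofReal (f x)) (Set.Ico a b) := by
  rw [withDensity_apply _ measurableSet_Ico]
  calc ENNReal.ofReal (δ * (b - a)) = ENNReal.ofReal δ * ENNReal.ofReal (b - a) :=
        ENNReal.ofReal_mul hδ.le
    _ = ENNReal.ofReal δ * volume (Set.Ico a b) := by rw [Real.volume_Ico]
    _ = ∫⁻ _ in Set.Ico a b, ENNReal.ofReal δ ∂volume := (setLIntegral_const _ _).symm
    _ ≤ ∫⁻ x in Set.Ico a b, ENNReal.ofReal (f x) ∂volume := by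
        apply setLIntegral_mono' measurableSet_Ico
        intro x hx
        exact ENNReal.ofReal_le_ofReal (hf_lb x ⟨le_trans ha hx.1, lt_of_lt_of_le hx.2 hb⟩)

lemma mu_finite (f : ℝ → ℝ) (xL xR Δ : ℝ) (hf_supp : ∀ x, x ∉ Set.Ico xL xR → f x = 0)
    (hf_ub : ∀ x ∈ Set.Ico xL xR, f x ≤ Δ) :
    IsFiniteMeasure (volume.withDensity fun x => ENNReal.ofReal (f x)) := by
  constructor
  rw [withDensity_apply _ MeasurableSet.univ, Measure.restrict_univ]
  calc ∫⁻ x, ENNReal.ofReal (f x) ∂volume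
      ≤ ∫⁻ x, (Set.Ico xL xR).indicator (fun _ => ENNReal.ofReal Δ) x ∂volume := by
        apply lintegral_mono
        intro x
        by_cases hx : x ∈ Set.Ico xL xR
        · rw [Set.indicator_of_mem hx]
          exact ENNReal.ofReal_le_ofReal (hf_ub x hx)
        · rw [Set.indicator_of_notMem hx]
          simp [hf_supp x hx]
    _ = ENNReal.ofReal Δ * volume (Set.Ico xL xR) := by
        rw [lintegral_indicator measurableSet_Ico, setLIntegral_const]
    _ < ⊤ := by
        rw [Real.volume_Ico]
        exact ENNReal.mul_lt_top ENNReal.ofReal_lt_top ENNReal.ofReal_lt_top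

/-- Let `X₁, …, Xₙ` be i.i.d. with density `f` bounded below by `δ > 0` on its
support `[x_L, x_R)`. Then `E[ 1/(x_R - X_{(n-1)})² · 1{exactly two observations lie in
[x_R - h, x_R)} ] = +∞` for any `h ∈ (0, x_R - x_L)`. Here `X_{(n-1)}` is the second largest
order statistic. -/
theorem expectation_inv_sq_dist_second_largest_infinite
    (n : ℕ) (hn : 3 ≤ n) (f : ℝ → ℝ) (xL xR δ Δ h : ℝ)
    (hδ : 0 < δ) (hΔ : δ ≤ Δ)
    (hf_meas : Measurable f)
    (hf_supp : ∀ x, x ∉ Set.Ico xL xR → f x = 0)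
    (hf_lb : ∀ x ∈ Set.Ico xL xR, δ ≤ f x)
    (hf_ub : ∀ x ∈ Set.Ico xL xR, f x ≤ Δ)
    (hf_dens : ∫ x, f x = 1)
    (hh : 0 < h) (hhlt : h < xR - xL) :
    ∫⁻ ω in {ω : Fin n → ℝ |
        (Finset.univ.filter fun i => ω i ∈ Set.Ico (xR - h) xR).card = 2},
      ENNReal.ofReal (((xR - orderStat n (n - 2) ω) ^ 2)⁻¹)
      ∂(Measure.pi fun _ : Fin n => volume.withDensity fun x => ENNReal.ofReal (f x)) = ⊤ := by
  obtain ⟨m, rfl⟩ : ∃ m, n = m + 3 := ⟨n - 3, by omega⟩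
  have hidx : m + 3 - 2 = m + 1 := rfl
  have hL : 0 < xR - h - xL := by linarith
  set μ : Measure ℝ := volume.withDensity fun x => ENNReal.ofReal (f x) with hμdef
  haveI : IsFiniteMeasure μ := mu_finite f xL xR Δ hf_supp hf_ub
  have h01 : (0 : Fin (m+3)) ≠ 1 := by
    simp [Fin.ext_iff]
  -- geometric sequence of points approaching xR
  set a : ℕ → ℝ := fun k => xR - h / 2 ^ k with ha
  have hapos : ∀ k : ℕ, 0 < h / 2 ^ k := fun k => div_pos hh (by positivity)
  have haltR : ∀ k, a k < xR := fun k => by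
    simp only [ha]; linarith [hapos k]
  have haleft : ∀ k, xR - h ≤ a k := by
    intro k
    have h2k : (1:ℝ) ≤ 2 ^ k := one_le_pow₀ (by norm_num)
    have : h / 2 ^ k ≤ h := by
      rw [div_le_iff₀ (by positivity)]
      nlinarith
    simp only [ha]; linarith
  have hamono : ∀ k l : ℕ, k ≤ l → a k ≤ a l := by
    intro k l hkl
    have : h / 2 ^ l ≤ h / 2 ^ k :=
      div_le_div_of_nonneg_left hh.le (by positivity) (pow_le_pow_right₀ (by norm_num) hkl)
    simp only [ha]; linarith
  -- the sets
  set t : ℕ → Fin (m+3) → Set ℝ := fun k i =>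
    if (i : ℕ) < 2 then Set.Ico (a k) (a (k+1)) else Set.Ico xL (xR - h) with ht
  set S : ℕ → Set (Fin (m+3) → ℝ) := fun k => Set.pi Set.univ (t k) with hS
  have ht01 : ∀ k (i : Fin (m+3)), (i : ℕ) < 2 → t k i = Set.Ico (a k) (a (k+1)) := by
    intro k i hi; simp only [ht, if_pos hi]
  have ht2 : ∀ k (i : Fin (m+3)), ¬((i : ℕ) < 2) → t k i = Set.Ico xL (xR - h) := by
    intro k i hi; simp only [ht, if_neg hi]
  have htmeas : ∀ k i, MeasurableSet (t k i) := by
    intro k i; simp only [ht]; split <;> exact measurableSet_Ico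
  have hSmeas : ∀ k, MeasurableSet (S k) := fun k => MeasurableSet.univ_pi (htmeas k)
  have hSkey : ∀ k l : ℕ, k < l → Disjoint (S k) (S l) := by
    intro k l hlt
    apply Set.disjoint_left.mpr
    intro ω hk hl
    have h0k : ω 0 ∈ t k 0 := Set.mem_univ_pi.mp hk 0
    have h0l : ω 0 ∈ t l 0 := Set.mem_univ_pi.mp hl 0
    rw [ht01 k 0 (by simp)] at h0k
    rw [ht01 l 0 (by simp)] at h0l
    have : a (k+1) ≤ a l := hamono _ _ (by omega)
    have := h0k.2
    have := h0l.1
    linarith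
  have hSdisj : Pairwise (Function.onFun Disjoint S) := by
    intro k l hkl
    rcases lt_or_gt_of_ne hkl with hlt | hlt
    · exact hSkey k l hlt
    · exact (hSkey l k hlt).symm
  -- each S k lies in the event set
  have hfilter : ∀ k (ω : Fin (m+3) → ℝ), ω ∈ S k →
      (Finset.univ.filter fun i => ω i ∈ Set.Ico (xR - h) xR)
        = ({0, 1} : Finset (Fin (m+3))) := by
    intro k ω hω
    ext i
    simp only [Finset.mem_filter, Finset.mem_univ, true_and, Finset.mem_insert,
      Finset.mem_singleton]
    have hωi := Set.mem_univ_pi.mp hω i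
    constructor
    · intro hmem
      by_contra hne
      push_neg at hne
      have hival : ¬ ((i:ℕ) < 2) := by
        intro hival
        have : (i:ℕ) = 0 ∨ (i:ℕ) = 1 := by omega
        rcases this with h0 | h1
        · exact hne.1 (Fin.ext (by simp [h0]))
        · exact hne.2 (Fin.ext (by simp [h1]))
      rw [ht2 k i hival] at hωi
      have := hmem.1
      have := hωi.2
      linarith
    · intro hi
      have hival : (i:ℕ) < 2 := by
        rcases hi with rfl | rfl
        · simp
        · simp
      rw [ht01 k i hival] at hωi
      exact ⟨le_trans (haleft k) hωi.1, lt_of_lt_of_le hωi.2 (haltR (k+1)).le⟩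
  have hcard01 : ({0, 1} : Finset (Fin (m+3))).card = 2 := by
    rw [Finset.card_insert_of_notMem (by simp [h01]), Finset.card_singleton]
  have hSsub : ∀ k, S k ⊆ {ω : Fin (m+3) → ℝ |
      (Finset.univ.filter fun i => ω i ∈ Set.Ico (xR - h) xR).card = 2} := by
    intro k ω hω
    simp only [Set.mem_setOf_eq, hfilter k ω hω, hcard01]
  -- pointwise lower bound for the integrand on S k
  have hbound : ∀ k (ω : Fin (m+3) → ℝ), ω ∈ S k →
      ENNReal.ofReal (((h / 2 ^ k) ^ 2)⁻¹) ≤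
        ENNReal.ofReal (((xR - orderStat (m+3) (m+3-2) ω) ^ 2)⁻¹) := by
    intro k ω hω
    rw [hidx]
    have hall : ∀ i, ω i < xR := by
      intro i
      have hωi := Set.mem_univ_pi.mp hω i
      by_cases hival : (i:ℕ) < 2
      · rw [ht01 k i hival] at hωi
        exact lt_of_lt_of_le hωi.2 (haltR (k+1)).le
      · rw [ht2 k i hival] at hωi
        have := hωi.2
        linarith
    have hω0 : a k ≤ ω 0 := by
      have hωi := Set.mem_univ_pi.mp hω 0
      rw [ht01 k 0 (by simp)] at hωi
      exact hωi.1
    have hω1 : a k ≤ ω 1 := by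
      have hωi := Set.mem_univ_pi.mp hω 1
      rw [ht01 k 1 (by simp)] at hωi
      exact hωi.1
    have hqa : a k ≤ orderStat (m+3) (m+1) ω :=
      le_orderStat h01 hω0 hω1 (by omega) (by omega)
    obtain ⟨i0, hq⟩ := orderStat_mem (k := m+1) (n := m+3) (by omega) ω
    have hqlt : orderStat (m+3) (m+1) ω < xR := hq ▸ hall i0
    apply ENNReal.ofReal_le_ofReal
    have h1 : 0 < xR - orderStat (m+3) (m+1) ω := by linarith
    have h2 : xR - orderStat (m+3) (m+1) ω ≤ h / 2 ^ k := by
      have := hapos k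
      simp only [ha] at hqa
      linarith
    apply inv_anti₀ (by positivity)
    nlinarith
  -- measure lower bound for S k
  have hmeasS : ∀ k : ℕ,
      (ENNReal.ofReal (δ * (h / 2 ^ (k+1)))) ^ 2
        * (ENNReal.ofReal (δ * (xR - h - xL))) ^ (m+1)
      ≤ Measure.pi (fun _ : Fin (m+3) => μ) (S k) := by
    intro k
    rw [hS, Measure.pi_pi]
    have hstep : a (k+1) - a k = h / 2 ^ (k+1) := by
      simp only [ha]
      rw [pow_succ]
      field_simp
      ring
    have hterm : ∀ i : Fin (m+3),
        (if (i:ℕ) < 2 then ENNReal.ofReal (δ * (h / 2 ^ (k+1)))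
          else ENNReal.ofReal (δ * (xR - h - xL))) ≤ μ (t k i) := by
      intro i
      by_cases hival : (i:ℕ) < 2
      · rw [if_pos hival, ht01 k i hival, ← hstep]
        exact mu_Ico_ge f xL xR δ hδ hf_lb (by linarith [haleft k, hhlt]) (haltR (k+1)).le
      · rw [if_neg hival, ht2 k i hival]
        have : δ * (xR - h - xL) = δ * ((xR - h) - xL) := by ring
        rw [this]
        exact mu_Ico_ge f xL xR δ hδ hf_lb le_rfl (by linarith)
    calc (ENNReal.ofReal (δ * (h / 2 ^ (k+1)))) ^ 2
          * (ENNReal.ofReal (δ * (xR - h - xL))) ^ (m+1)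
        = ∏ i : Fin (m+3), (if (i:ℕ) < 2 then ENNReal.ofReal (δ * (h / 2 ^ (k+1)))
            else ENNReal.ofReal (δ * (xR - h - xL))) := by
          rw [Finset.prod_ite, Finset.prod_const, Finset.prod_const]
          have hfeq : (Finset.univ.filter fun i : Fin (m+3) => (i:ℕ) < 2)
              = ({0, 1} : Finset (Fin (m+3))) := by
            ext i
            simp only [Finset.mem_filter, Finset.mem_univ, true_and, Finset.mem_insert,
              Finset.mem_singleton]
            constructor
            · intro hival
              have : (i:ℕ) = 0 ∨ (i:ℕ) = 1 := by omega
              rcases this with h0 | h1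
              · exact Or.inl (Fin.ext (by simp [h0]))
              · exact Or.inr (Fin.ext (by simp [h1]))
            · rintro (rfl | rfl) <;> simp
          have hc1 : (Finset.univ.filter fun i : Fin (m+3) => (i:ℕ) < 2).card = 2 := by
            rw [hfeq, hcard01]
          have hc2 : (Finset.univ.filter fun i : Fin (m+3) => ¬((i:ℕ) < 2)).card = m + 1 := by
            have := Finset.card_filter_add_card_filter_not
              (s := (Finset.univ : Finset (Fin (m+3)))) (p := fun i : Fin (m+3) => (i:ℕ) < 2)
            rw [Finset.card_univ, Fintype.card_fin] at this
            omega
          rw [hc1, hc2]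
      _ ≤ ∏ i : Fin (m+3), μ (t k i) := Finset.prod_le_prod' fun i _ => hterm i
  -- the constant c
  set c : ℝ≥0∞ := ENNReal.ofReal (δ ^ 2 / 4)
      * (ENNReal.ofReal (δ * (xR - h - xL))) ^ (m+1) with hc
  have hcne : c ≠ 0 := by
    rw [hc]
    apply mul_ne_zero
    · exact (ENNReal.ofReal_pos.mpr (by positivity)).ne'
    · exact pow_ne_zero _ (ENNReal.ofReal_pos.mpr (by positivity)).ne'
  -- per-k lower bound of the integral
  have hck : ∀ k : ℕ, c ≤ ∫⁻ ω in S k,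
      ENNReal.ofReal (((xR - orderStat (m+3) (m+3-2) ω) ^ 2)⁻¹)
      ∂(Measure.pi fun _ : Fin (m+3) => μ) := by
    intro k
    have hnum : ENNReal.ofReal (δ ^ 2 / 4)
        = ENNReal.ofReal (((h / 2 ^ k) ^ 2)⁻¹) * (ENNReal.ofReal (δ * (h / 2 ^ (k+1)))) ^ 2 := by
      rw [← ENNReal.ofReal_pow (by positivity), ← ENNReal.ofReal_mul (by positivity)]
      congr 1
      have h2k : (0:ℝ) < 2 ^ k := by positivity
      field_simp
      ring
    calc c = ENNReal.ofReal (((h / 2 ^ k) ^ 2)⁻¹)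
          * ((ENNReal.ofReal (δ * (h / 2 ^ (k+1)))) ^ 2
            * (ENNReal.ofReal (δ * (xR - h - xL))) ^ (m+1)) := by
          rw [hc, hnum]; ring
      _ ≤ ENNReal.ofReal (((h / 2 ^ k) ^ 2)⁻¹)
          * Measure.pi (fun _ : Fin (m+3) => μ) (S k) := by
          exact mul_le_mul_right (hmeasS k) _
      _ = ∫⁻ _ in S k, ENNReal.ofReal (((h / 2 ^ k) ^ 2)⁻¹)
            ∂(Measure.pi fun _ : Fin (m+3) => μ) := (setLIntegral_const _ _).symm
      _ ≤ ∫⁻ ω in S k, ENNReal.ofReal (((xR - orderStat (m+3) (m+3-2) ω) ^ 2)⁻¹)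
            ∂(Measure.pi fun _ : Fin (m+3) => μ) :=
          setLIntegral_mono' (hSmeas k) (hbound k)
  -- conclude
  refine le_antisymm le_top ?_
  calc (⊤ : ℝ≥0∞) = ∑' _ : ℕ, c := (ENNReal.tsum_const_eq_top_of_ne_zero hcne).symm
    _ ≤ ∑' k : ℕ, ∫⁻ ω in S k,
          ENNReal.ofReal (((xR - orderStat (m+3) (m+3-2) ω) ^ 2)⁻¹)
          ∂(Measure.pi fun _ : Fin (m+3) => μ) := ENNReal.tsum_le_tsum hck
    _ = ∫⁻ ω in ⋃ k, S k,
          ENNReal.ofReal (((xR - orderStat (m+3) (m+3-2) ω) ^ 2)⁻¹)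
          ∂(Measure.pi fun _ : Fin (m+3) => μ) := (lintegral_iUnion hSmeas hSdisj _).symm
    _ ≤ ∫⁻ ω in {ω : Fin (m+3) → ℝ |
          (Finset.univ.filter fun i => ω i ∈ Set.Ico (xR - h) xR).card = 2},
          ENNReal.ofReal (((xR - orderStat (m+3) (m+3-2) ω) ^ 2)⁻¹)
          ∂(Measure.pi fun _ : Fin (m+3) => μ) :=
        lintegral_mono_set (Set.iUnion_subset hSsub)
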